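/- Let φ : [0, π/2] → ℝ be a solution of the ODE φ''(x) − tan(x)·φ'(x) + 2φ(x) = 0 with initial conditions φ(0) = 1, φ'(0) = 0 (the rotationally invariant solution of (Δ+2)φ = 0 on the sphere regular at the equator). If φ(x) > 0 on [0, x₀) and φ(x₀) = 0 for some x₀ ∈ (0, π/2), then φ'(x) < 0 for all x ∈ (0, x₀). -/

import Mathlib

open Set Real

/-- the rotationally invariant solution of `(Δ+2)φ = 0` with
`φ(0) = 1`, `φ'(0) = 0`, positive before its first zero `x₀`, is strictly
decreasing on `(0, x₀)`. -/
theorem first_eigenfunction_strictly_decreasing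
    (φ : ℝ → ℝ) (hsmooth : ContDiff ℝ 2 φ)
    (hODE : ∀ x ∈ Set.Ico 0 (π/2),
      deriv (deriv φ) x - Real.tan x * deriv φ x + 2 * φ x = 0)
    (hφ0 : φ 0 = 1) (hφ'0 : deriv φ 0 = 0)
    (x₀ : ℝ) (hx₀ : x₀ ∈ Set.Ioo 0 (π/2))
    (hpos : ∀ x ∈ Set.Ico 0 x₀, 0 < φ x)
    (hzero : φ x₀ = 0) :
    ∀ x ∈ Set.Ioo 0 x₀, deriv φ x < 0 := by
  have h2 : ContDiff ℝ (1 + 1) φ := by norm_num [hsmooth]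
  have hd2 : ContDiff ℝ 1 (deriv φ) := (contDiff_succ_iff_deriv.mp h2).2.2
  have hdiff2 : Differentiable ℝ (deriv φ) := hd2.differentiable one_ne_zero
  set g : ℝ → ℝ := fun x => Real.cos x * deriv φ x with hg
  have hgcont : Continuous g := Real.continuous_cos.mul hd2.continuous
  have hgderiv : ∀ y ∈ Set.Ico 0 (π/2), HasDerivAt g (-2 * Real.cos y * φ y) y := by
    intro y hy
    have hcos : 0 < Real.cos y := Real.cos_pos_of_mem_Ioo
      ⟨lt_of_lt_of_le (by linarith [Real.pi_pos]) hy.1, hy.2⟩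
    have h1 : HasDerivAt Real.cos (-Real.sin y) y := Real.hasDerivAt_cos y
    have h2' : HasDerivAt (deriv φ) (deriv (deriv φ) y) y := (hdiff2 y).hasDerivAt
    have := h1.mul h2'
    have hODEy := hODE y hy
    have htan : Real.tan y = Real.sin y / Real.cos y := Real.tan_eq_sin_div_cos y
    have heq : -Real.sin y * deriv φ y + Real.cos y * deriv (deriv φ) y
        = -2 * Real.cos y * φ y := by
      have : deriv (deriv φ) y = Real.tan y * deriv φ y - 2 * φ y := by linarith
      rw [this, htan]
      field_simp
      ring
    rw [heq] at this
    exact this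
  intro x hx
  have hx0 : (0:ℝ) < x := hx.1
  have hxx0 : x < x₀ := hx.2
  have hxlt : x < π/2 := lt_trans hxx0 hx₀.2
  have hcosx : 0 < Real.cos x := Real.cos_pos_of_mem_Ioo ⟨by linarith [Real.pi_pos], hxlt⟩
  have hanti : StrictAntiOn g (Set.Icc 0 x) := by
    apply strictAntiOn_of_deriv_neg (convex_Icc 0 x) (hgcont.continuousOn)
    intro y hy
    rw [interior_Icc] at hy
    have hy1 : y ∈ Set.Ico 0 (π/2) := ⟨le_of_lt hy.1, lt_trans hy.2 hxlt⟩
    rw [(hgderiv y hy1).deriv]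
    have hcosy : 0 < Real.cos y := Real.cos_pos_of_mem_Ioo
      ⟨by linarith [Real.pi_pos, hy.1], hy1.2⟩
    have hφy : 0 < φ y := hpos y ⟨le_of_lt hy.1, lt_trans hy.2 hxx0⟩
    nlinarith
  have hg0 : g 0 = 0 := by simp [hg, hφ'0]
  have hgx : g x < 0 := by
    have := hanti (Set.left_mem_Icc.mpr (le_of_lt hx0)) (Set.right_mem_Icc.mpr (le_of_lt hx0)) hx0
    rwa [hg0] at this
  have : Real.cos x * deriv φ x < 0 := hgx
  nlinarith
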